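/- For n ≥ 2 and non-negative integers r1 < r2 ≤ m, the star product of the Berman code Ber_n^{r1}(m) with the Dual Berman code B_n^{r2}(m) equals the full space F_2^{n^m}. -/

import Mathlib

open scoped BigOperators

/-- The `l`-th block (of length `n^m`) of a vector of length `n^(m+1)`,
where the first coordinate of the index tuple selects the block. -/
def blockAt (n m : ℕ) (l : Fin n) (v : (Fin (m + 1) → Fin n) → ZMod 2) :
    (Fin m → Fin n) → ZMod 2 :=
  fun j => v (Fin.cons l j)

/-- Berman code `Ber_n^r(m) ⊆ F_2^{n^m}`, coordinates indexed by `H^m` with `H = Fin n`.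
`Ber_n^m(m) = {0}`, `Ber_n^0(m)` is the single parity-check code, and for `1 ≤ r`,
a codeword is a concatenation `(v_0|…|v_{n-1})` with each block in `Ber_n^{r-1}(m-1)`
and the sum of the blocks in `Ber_n^r(m-1)`. -/
def Ber (n : ℕ) : ℕ → (m : ℕ) → Set ((Fin m → Fin n) → ZMod 2)
  | _, 0 => {0}
  | 0, (m + 1) => {c | ∑ i, c i = 0}
  | (r + 1), (m + 1) =>
      {v | (∀ l : Fin n, blockAt n m l v ∈ Ber n r m) ∧
        (fun j => ∑ l : Fin n, v (Fin.cons l j)) ∈ Ber n (r + 1) m}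

/-- Dual Berman code `B_n^r(m) ⊆ F_2^{n^m}`.
`B_n^m(m)` is the full space, `B_n^0(m)` is the repetition code, and for `1 ≤ r`,
a codeword is `(u+u_0|…|u+u_{n-2}|u)` with each `u_l ∈ B_n^{r-1}(m-1)` and `u ∈ B_n^r(m-1)`. -/
def DBer (n : ℕ) : ℕ → (m : ℕ) → Set ((Fin m → Fin n) → ZMod 2)
  | _, 0 => Set.univ
  | 0, (m + 1) => {c | ∃ a : ZMod 2, c = fun _ => a}
  | (r + 1), (m + 1) =>
      {v | ∃ u ∈ DBer n (r + 1) m, ∃ w : Fin n → ((Fin m → Fin n) → ZMod 2),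
        (∀ l, w l ∈ DBer n r m) ∧
        (∀ l : Fin n, blockAt n m l v = if l.val = n - 1 then u else u + w l)}

/-- Star product of two codes: the span of all coordinatewise products. -/
def starProd {ι : Type*} (C D : Set (ι → ZMod 2)) : Submodule (ZMod 2) (ι → ZMod 2) :=
  Submodule.span (ZMod 2) {x | ∃ c ∈ C, ∃ d ∈ D, x = c * d}

/-- Dual code w.r.t. the standard bilinear form. -/
def dualCode {ι : Type*} [Fintype ι] (C : Set (ι → ZMod 2)) : Set (ι → ZMod 2) :=
  {x | ∀ c ∈ C, ∑ i, x i * c i = 0}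

/-- Partial order on tuples: `j ⪯ i` iff `supp(j) ⊆ supp(i)` and `j` agrees with `i` on
`supp(j)`. -/
def preceq {n m : ℕ} (j i : Fin m → Fin n) : Prop :=
  ∀ s, (j s).val ≠ 0 → j s = i s

instance {n m : ℕ} (j i : Fin m → Fin n) : Decidable (preceq j i) := by
  unfold preceq; infer_instance

/-- Hamming weight of a tuple in `H^m`: the number of nonzero entries. -/
def tupleWt {n m : ℕ} (j : Fin m → Fin n) : ℕ :=
  (Finset.univ.filter fun s => (j s).val ≠ 0).card

/-- The vector `c_m(i')`, the indicator of `{i : i ⪯ i'}`. -/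
def cm {n m : ℕ} (i' : Fin m → Fin n) : (Fin m → Fin n) → ZMod 2 :=
  fun i => if preceq i i' then 1 else 0

/-- The vector `d_m(i')`, the indicator of `{i : i ⪰ i'}`. -/
def dm {n m : ℕ} (i' : Fin m → Fin n) : (Fin m → Fin n) → ZMod 2 :=
  fun i => if preceq i' i then 1 else 0

/-- Standard basis vector of `F_2^{n^m}` at coordinate `v`. -/
def eVec {n m : ℕ} (v : Fin m → Fin n) : (Fin m → Fin n) → ZMod 2 :=
  fun i => if i = v then 1 else 0

namespace Stmt3

lemma preceq_refl {n m : ℕ} (v : Fin m → Fin n) : preceq v v := fun _ _ => rfl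

lemma preceq_trans {n m : ℕ} {a b c : Fin m → Fin n} (h1 : preceq a b) (h2 : preceq b c) :
    preceq a c := by
  intro s hs
  rw [h1 s hs]
  exact h2 s (by rw [← h1 s hs]; exact hs)

lemma filter_subset_of_preceq {n m : ℕ} {a b : Fin m → Fin n} (h : preceq a b) :
    (Finset.univ.filter fun s => (a s).val ≠ 0) ⊆ (Finset.univ.filter fun s => (b s).val ≠ 0) := by
  intro s hs
  simp only [Finset.mem_filter, Finset.mem_univ, true_and] at hs ⊢
  rw [← h s hs]; exact hs

lemma tupleWt_le_of_preceq {n m : ℕ} {a b : Fin m → Fin n} (h : preceq a b) :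
    tupleWt a ≤ tupleWt b :=
  Finset.card_le_card (filter_subset_of_preceq h)

lemma eq_of_preceq_of_wt_le {n m : ℕ} {a b : Fin m → Fin n} (h : preceq a b)
    (hw : tupleWt b ≤ tupleWt a) : a = b := by
  have hset : (Finset.univ.filter fun s => (a s).val ≠ 0)
      = (Finset.univ.filter fun s => (b s).val ≠ 0) :=
    Finset.eq_of_subset_of_card_le (filter_subset_of_preceq h) hw
  funext s
  by_cases hs : (a s).val ≠ 0
  · exact h s hs
  · push_neg at hs
    have hsb : ¬ s ∈ (Finset.univ.filter fun s => (b s).val ≠ 0) := by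
      rw [← hset]; simp [hs]
    simp only [Finset.mem_filter, Finset.mem_univ, true_and, not_not] at hsb
    exact Fin.ext (by rw [hs, hsb])

lemma tupleWt_eq_sum {n m : ℕ} (j : Fin m → Fin n) :
    tupleWt j = ∑ s, if (j s).val ≠ 0 then 1 else 0 := by
  simp [tupleWt, Finset.card_filter]

lemma tupleWt_succ {n m : ℕ} (a : Fin (m+1) → Fin n) :
    tupleWt a = (if (a 0).val ≠ 0 then 1 else 0) + tupleWt (Fin.tail a) := by
  simp only [tupleWt_eq_sum, Fin.sum_univ_succ]
  rfl

lemma preceq_cons_iff {n m : ℕ} (l : Fin n) (j : Fin m → Fin n) (b : Fin (m+1) → Fin n) :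
    preceq (Fin.cons l j) b ↔ ((l.val ≠ 0 → l = b 0) ∧ preceq j (Fin.tail b)) := by
  constructor
  · intro h
    refine ⟨fun hl => ?_, fun s hs => ?_⟩
    · simpa using h 0 (by simpa using hl)
    · simpa [Fin.tail] using h s.succ (by simpa using hs)
  · rintro ⟨h0, ht⟩ s
    refine Fin.cases ?_ (fun t => ?_) s
    · intro hs; simpa using h0 (by simpa using hs)
    · intro hs
      have := ht t (by simpa using hs)
      simpa [Fin.tail] using this

lemma cons_preceq_iff {n m : ℕ} (a : Fin (m+1) → Fin n) (l : Fin n) (j : Fin m → Fin n) :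
    preceq a (Fin.cons l j) ↔ (((a 0).val ≠ 0 → a 0 = l) ∧ preceq (Fin.tail a) j) := by
  constructor
  · intro h
    refine ⟨fun hl => by simpa using h 0 hl, fun s hs => by simpa [Fin.tail] using h s.succ hs⟩
  · rintro ⟨h0, ht⟩ s
    refine Fin.cases ?_ (fun t => ?_) s
    · intro hs; simpa using h0 hs
    · intro hs
      have := ht t hs
      simpa [Fin.tail] using this

end Stmt3
namespace Stmt3

lemma zero_mem_Ber (n r m : ℕ) : (0 : (Fin m → Fin n) → ZMod 2) ∈ Ber n r m := by
  induction m generalizing r with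
  | zero => cases r <;> simp [Ber]
  | succ m ih =>
    cases r with
    | zero => simp [Ber]
    | succ r =>
      refine ⟨fun l => ?_, ?_⟩
      · have h : blockAt n m l (0 : (Fin (m+1) → Fin n) → ZMod 2) = 0 := rfl
        rw [h]; exact ih r
      · have h : (fun j => ∑ l : Fin n,
            (0 : (Fin (m+1) → Fin n) → ZMod 2) (Fin.cons l j)) = 0 := by
          funext j; simp
        rw [h]; exact ih (r+1)

lemma zero_mem_DBer (n r m : ℕ) : (0 : (Fin m → Fin n) → ZMod 2) ∈ DBer n r m := by
  induction m generalizing r with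
  | zero => cases r <;> simp [DBer]
  | succ m ih =>
    cases r with
    | zero => exact ⟨0, by funext i; simp⟩
    | succ r =>
      refine ⟨0, ih (r+1), fun _ => 0, fun _ => ih r, fun l => ?_⟩
      have h : blockAt n m l (0 : (Fin (m+1) → Fin n) → ZMod 2) = 0 := rfl
      rw [h]
      split <;> simp

lemma blockAt_cm {n m : ℕ} (l : Fin n) (b : Fin (m+1) → Fin n) :
    blockAt n m l (cm b) = if (l.val ≠ 0 → l = b 0) then cm (Fin.tail b) else 0 := by
  funext j
  simp only [blockAt, cm, preceq_cons_iff]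
  by_cases h1 : (l.val ≠ 0 → l = b 0)
  · rw [if_pos h1]
    by_cases h2 : preceq j (Fin.tail b) <;> simp [cm, h1, h2] <;> exact h1
  · rw [if_neg h1]
    simp [h1]

lemma blockAt_dm {n m : ℕ} (l : Fin n) (a : Fin (m+1) → Fin n) :
    blockAt n m l (dm a) = if ((a 0).val ≠ 0 → a 0 = l) then dm (Fin.tail a) else 0 := by
  funext j
  simp only [blockAt, dm, cons_preceq_iff]
  by_cases h1 : ((a 0).val ≠ 0 → a 0 = l)
  · rw [if_pos h1]
    by_cases h2 : preceq (Fin.tail a) j <;> simp [dm, h1, h2] <;> exact h1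
  · rw [if_neg h1]
    simp [h1]

lemma sum_cond {n : ℕ} (b0 : Fin n) :
    ∑ l : Fin n, (if (l.val ≠ 0 → l = b0) then (1 : ZMod 2) else 0)
      = if b0.val = 0 then 1 else 0 := by
  haveI : NeZero n := ⟨b0.pos.ne'⟩
  by_cases h0 : b0.val = 0
  · have hb : b0 = 0 := Fin.ext (by simpa using h0)
    have : ∀ l : Fin n, (if (l.val ≠ 0 → l = b0) then (1 : ZMod 2) else 0)
        = if l = 0 then 1 else 0 := by
      intro l
      by_cases hl : l = 0
      · subst hl; simp [hb]
      · have hlv : l.val ≠ 0 := fun hv => hl (Fin.ext (by simpa using hv))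
        have : ¬ (l.val ≠ 0 → l = b0) := by
          intro hc; exact hl (by rw [hc hlv, hb])
        simp [this, hl, hb]
    rw [Finset.sum_congr rfl (fun l _ => this l)]
    simp [h0]
  · have : ∀ l : Fin n, (if (l.val ≠ 0 → l = b0) then (1 : ZMod 2) else 0)
        = (if l = 0 then 1 else 0) + (if l = b0 then 1 else 0) := by
      intro l
      by_cases hl : l = 0
      · subst hl
        have : ¬ ((0 : Fin n) = b0) := fun hc => h0 (by rw [← hc]; simp)
        simp [this]
      · have hlv : l.val ≠ 0 := fun hv => hl (Fin.ext (by simpa using hv))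
        by_cases hlb : l = b0
        · have hb0 : ¬ b0 = 0 := fun hc => h0 (by simp [hc])
          simp [hlb, hlv, h0, hl, hb0]
        · have : ¬ (l.val ≠ 0 → l = b0) := fun hc => hlb (hc hlv)
          simp [this, hl, hlb, hlv]
    rw [Finset.sum_congr rfl (fun l _ => this l)]
    rw [Finset.sum_add_distrib]
    simp [h0]
    decide

end Stmt3
namespace Stmt3

lemma sum_pi_split {n m : ℕ} (f : (Fin (m+1) → Fin n) → ZMod 2) :
    ∑ i, f i = ∑ l : Fin n, ∑ j : Fin m → Fin n, f (Fin.cons l j) := by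
  rw [← Equiv.sum_comp (Fin.consEquiv (fun _ => Fin n)) f]
  rw [Fintype.sum_prod_type]
  rfl

lemma sum_cm (n : ℕ) : ∀ (m : ℕ) (b : Fin m → Fin n), 1 ≤ tupleWt b → ∑ i, cm b i = 0 := by
  intro m
  induction m with
  | zero =>
    intro b hb
    exfalso
    have : tupleWt b = 0 := by simp [tupleWt]
    omega
  | succ m ih =>
    intro b hb
    rw [sum_pi_split]
    have hterm : ∀ l : Fin n, ∀ j : Fin m → Fin n,
        cm b (Fin.cons l j) = (if (l.val ≠ 0 → l = b 0) then (1 : ZMod 2) else 0)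
          * cm (Fin.tail b) j := by
      intro l j
      simp only [cm, preceq_cons_iff]
      by_cases h1 : (l.val ≠ 0 → l = b 0) <;> by_cases h2 : preceq j (Fin.tail b) <;>
        simp [h1, h2]
    have : ∀ l : Fin n, ∑ j : Fin m → Fin n, cm b (Fin.cons l j)
        = (if (l.val ≠ 0 → l = b 0) then (1 : ZMod 2) else 0)
          * ∑ j : Fin m → Fin n, cm (Fin.tail b) j := by
      intro l
      rw [Finset.mul_sum]
      exact Finset.sum_congr rfl fun j _ => hterm l j
    rw [Finset.sum_congr rfl fun l _ => this l, ← Finset.sum_mul, sum_cond]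
    by_cases h0 : (b 0).val = 0
    · have hwt : 1 ≤ tupleWt (Fin.tail b) := by
        have := tupleWt_succ b
        simp [h0] at this
        omega
      rw [ih (Fin.tail b) hwt]
      simp
    · simp [h0]

lemma cm_mem_Ber (n : ℕ) : ∀ (m r : ℕ) (b : Fin m → Fin n),
    r + 1 ≤ tupleWt b → cm b ∈ Ber n r m := by
  intro m
  induction m with
  | zero =>
    intro r b hb
    exfalso
    have : tupleWt b = 0 := by simp [tupleWt]
    omega
  | succ m ih =>
    intro r b hb
    have hwt := tupleWt_succ b
    cases r with
    | zero =>
      show ∑ i, cm b i = 0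
      exact sum_cm n (m+1) b hb
    | succ r =>
      refine ⟨fun l => ?_, ?_⟩
      · rw [blockAt_cm]
        split
        · apply ih r
          split_ifs at hwt <;> omega
        · exact zero_mem_Ber n r m
      · have hsome : (fun j => ∑ l : Fin n, cm b (Fin.cons l j))
            = (if (b 0).val = 0 then (1 : ZMod 2) else 0) • cm (Fin.tail b) := by
          funext j
          simp only [cm, preceq_cons_iff, Pi.smul_apply, smul_eq_mul]
          rw [Finset.sum_congr rfl fun l (_ : l ∈ Finset.univ) =>
            (show (if ((l.val ≠ 0 → l = b 0) ∧ preceq j (Fin.tail b)) then (1:ZMod 2) else 0)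
              = (if (l.val ≠ 0 → l = b 0) then (1 : ZMod 2) else 0)
                * (if preceq j (Fin.tail b) then 1 else 0) by
            by_cases h1 : (l.val ≠ 0 → l = b 0) <;> by_cases h2 : preceq j (Fin.tail b) <;>
              simp [h1, h2])]
          rw [← Finset.sum_mul, sum_cond]
        rw [hsome]
        by_cases h0 : (b 0).val = 0
        · rw [if_pos h0, one_smul]
          apply ih (r+1)
          split_ifs at hwt <;> omega
        · rw [if_neg h0, zero_smul]
          exact zero_mem_Ber n (r+1) m

lemma dm_mem_DBer (n : ℕ) : ∀ (m r : ℕ) (a : Fin m → Fin n),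
    tupleWt a ≤ r → dm a ∈ DBer n r m := by
  intro m
  induction m with
  | zero => intro r a _; cases r <;> simp [DBer]
  | succ m ih =>
    intro r a ha
    have hwt := tupleWt_succ a
    cases r with
    | zero =>
      refine ⟨1, ?_⟩
      funext i
      have : preceq a i := by
        intro s hs
        exfalso
        have : 1 ≤ tupleWt a := by
          rw [tupleWt]
          refine Finset.card_pos.mpr ⟨s, ?_⟩
          simp [hs]
        omega
      simp [dm, this]
    | succ r =>
      by_cases h0 : (a 0).val = 0
      · refine ⟨dm (Fin.tail a), ih (r+1) (Fin.tail a) (by split_ifs at hwt <;> omega),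
          fun _ => 0, fun _ => zero_mem_DBer n r m, fun l => ?_⟩
        rw [blockAt_dm, if_pos (fun h => absurd h0 h)]
        split <;> simp
      · by_cases hval : (a 0).val = n - 1
        · refine ⟨dm (Fin.tail a), ih (r+1) (Fin.tail a) (by split_ifs at hwt <;> omega),
            fun _ => dm (Fin.tail a), fun _ => ih r (Fin.tail a) (by split_ifs at hwt <;> omega),
            fun l => ?_⟩
          rw [blockAt_dm]
          by_cases hl : l.val = n - 1
          · have : a 0 = l := Fin.ext (by rw [hval, hl])
            rw [if_pos (fun _ => this), if_pos hl]
          · have hne : a 0 ≠ l := fun hc => hl (by rw [← hc, hval])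
            rw [if_neg (fun hc => hne (hc h0)), if_neg hl]
            funext j
            simp only [Pi.add_apply, Pi.zero_apply]
            rw [CharTwo.add_self_eq_zero]
        · refine ⟨0, zero_mem_DBer n (r+1) m,
            fun l => if l = a 0 then dm (Fin.tail a) else 0, fun l => ?_, fun l => ?_⟩
          · show (if l = a 0 then dm (Fin.tail a) else 0) ∈ DBer n r m
            split
            · exact ih r (Fin.tail a) (by split_ifs at hwt <;> omega)
            · exact zero_mem_DBer n r m
          · rw [blockAt_dm]
            by_cases hl : l.val = n - 1
            · have hne : a 0 ≠ l := fun hc => hval (by rw [hc, hl])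
              rw [if_neg (fun hc => hne (hc h0)), if_pos hl]
            · rw [if_neg hl]
              show _ = 0 + (if l = a 0 then dm (Fin.tail a) else 0)
              by_cases hla : l = a 0
              · rw [if_pos (fun _ => hla.symm), if_pos hla, zero_add]
              · rw [if_neg (fun hc => hla ((hc h0).symm)), if_neg hla, zero_add]

end Stmt3
namespace Stmt3

/-- The indicator function of the interval `[a, b]`. -/
def ival {n m : ℕ} (a b : Fin m → Fin n) : (Fin m → Fin n) → ZMod 2 :=
  fun i => if preceq a i ∧ preceq i b then 1 else 0

lemma cm_mul_dm {n m : ℕ} (a b : Fin m → Fin n) : cm b * dm a = ival a b := by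
  funext i
  simp only [Pi.mul_apply, cm, dm, ival]
  by_cases h1 : preceq i b <;> by_cases h2 : preceq a i <;> simp [h1, h2]

lemma ival_mem {n m r1 r2 : ℕ} {a b : Fin m → Fin n} (h1 : r1 + 1 ≤ tupleWt b)
    (h2 : tupleWt a ≤ r2) : ival a b ∈ starProd (Ber n r1 m) (DBer n r2 m) :=
  Submodule.subset_span ⟨cm b, cm_mem_Ber n m r1 b h1, dm a, dm_mem_DBer n m r2 a h2,
    (cm_mul_dm a b).symm⟩

lemma ival_eq_sum {n m : ℕ} (a b : Fin m → Fin n) :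
    ival a b = ∑ v ∈ Finset.univ.filter (fun v => preceq a v ∧ preceq v b), eVec v := by
  funext x
  rw [Finset.sum_apply]
  simp only [eVec, ival]
  rw [Finset.sum_ite_eq (Finset.univ.filter (fun v => preceq a v ∧ preceq v b)) x (fun _ => 1)]
  simp

lemma ival_self {n m : ℕ} (v : Fin m → Fin n) : ival v v = eVec v := by
  funext i
  simp only [ival, eVec]
  by_cases h : i = v
  · simp [h, preceq_refl]
  · have : ¬ (preceq v i ∧ preceq i v) := by
      rintro ⟨h1, h2⟩
      exact h (eq_of_preceq_of_wt_le h2 (tupleWt_le_of_preceq h1))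
    simp [this, h]

lemma exists_up {n m : ℕ} (hn : 2 ≤ n) :
    ∀ (v : Fin m → Fin n) (w : ℕ), tupleWt v ≤ w → w ≤ m → ∃ t, preceq v t ∧ tupleWt t = w := by
  intro v w
  induction w with
  | zero =>
    intro h1 _
    exact ⟨v, preceq_refl v, by omega⟩
  | succ w ihw =>
    intro h1 h2
    by_cases hv : tupleWt v = w + 1
    · exact ⟨v, preceq_refl v, hv⟩
    · obtain ⟨t, htv, htw⟩ := ihw (by omega) (by omega)
      -- t has weight w < m, find a zero coordinate
      have hlt : tupleWt t < m := by omega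
      have : ∃ s0 : Fin m, (t s0).val = 0 := by
        by_contra hc
        push_neg at hc
        have : (Finset.univ.filter fun s => (t s).val ≠ 0) = Finset.univ :=
          Finset.filter_true_of_mem (fun s _ => hc s)
        rw [tupleWt, this, Finset.card_univ, Fintype.card_fin] at hlt
        omega
      obtain ⟨s0, hs0⟩ := this
      refine ⟨Function.update t s0 ⟨1, by omega⟩, ?_, ?_⟩
      · refine preceq_trans htv ?_
        intro s hs
        have hne : s ≠ s0 := fun hc => hs (by rw [hc, hs0])
        rw [Function.update_of_ne hne]
      · have hins : (Finset.univ.filter fun s => ((Function.update t s0 ⟨1, by omega⟩ : Fin m → Fin n) s).val ≠ 0)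
            = insert s0 (Finset.univ.filter fun s => (t s).val ≠ 0) := by
          ext s
          simp only [Finset.mem_filter, Finset.mem_univ, true_and, Finset.mem_insert]
          by_cases hss : s = s0
          · subst hss; simp [Function.update_self]
          · rw [Function.update_of_ne hss]; simp [hss]
        rw [tupleWt, hins, Finset.card_insert_of_notMem (by simp [hs0]), ← tupleWt, htw]

lemma exists_down {n m : ℕ} :
    ∀ (k : ℕ) (v : Fin m → Fin n) (w : ℕ), w ≤ tupleWt v → tupleWt v ≤ k →
      ∃ a, preceq a v ∧ tupleWt a = w := by
  intro k
  induction k with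
  | zero =>
    intro v w h1 h2
    exact ⟨v, preceq_refl v, by omega⟩
  | succ k ihk =>
    intro v w h1 h2
    by_cases hw : w = tupleWt v
    · exact ⟨v, preceq_refl v, hw.symm⟩
    · have hlt : w < tupleWt v := by omega
      have hpos : 0 < tupleWt v := by omega
      obtain ⟨s0, hs0⟩ := Finset.card_pos.mp hpos
      simp only [Finset.mem_filter, Finset.mem_univ, true_and] at hs0
      haveI : NeZero n := ⟨(v s0).pos.ne'⟩
      set v' : Fin m → Fin n := Function.update v s0 0 with hv'
      have hwt' : tupleWt v' = tupleWt v - 1 := by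
        have herase : (Finset.univ.filter fun s => (v' s).val ≠ 0)
            = (Finset.univ.filter fun s => (v s).val ≠ 0).erase s0 := by
          ext s
          simp only [Finset.mem_filter, Finset.mem_univ, true_and, Finset.mem_erase]
          by_cases hss : s = s0
          · subst hss; simp [hv', Function.update_self]
          · rw [hv', Function.update_of_ne hss]; simp [hss]
        rw [tupleWt, herase, Finset.card_erase_of_mem (by simp only [Finset.mem_filter, Finset.mem_univ, true_and]; exact hs0), ← tupleWt]
      have hpre : preceq v' v := by
        intro s hs
        have hne : s ≠ s0 := by
          intro hc; subst hc
          rw [hv'] at hs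
          simp [Function.update_self] at hs
        rw [hv', Function.update_of_ne hne]
      obtain ⟨a, hav', haw⟩ := ihk v' w (by omega) (by omega)
      exact ⟨a, preceq_trans hav' hpre, haw⟩

end Stmt3
namespace Stmt3

lemma eVec_mem_band {n m r1 r2 : ℕ} {v : Fin m → Fin n} (hb1 : r1 + 1 ≤ tupleWt v)
    (hb2 : tupleWt v ≤ r2) : eVec v ∈ starProd (Ber n r1 m) (DBer n r2 m) := by
  rw [← ival_self]
  exact ival_mem hb1 hb2

lemma eVec_mem_low {n m r1 r2 : ℕ} (hn : 2 ≤ n) (h12 : r1 < r2) (h2 : r2 ≤ m) :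
    ∀ (k : ℕ) (v : Fin m → Fin n), tupleWt v ≤ r2 → r1 + 1 - tupleWt v ≤ k →
      eVec v ∈ starProd (Ber n r1 m) (DBer n r2 m) := by
  intro k
  induction k with
  | zero => intro v h hk; exact eVec_mem_band (by omega) h
  | succ k ihk =>
    intro v hvr2 hk
    by_cases hb : r1 + 1 ≤ tupleWt v
    · exact eVec_mem_band hb hvr2
    · obtain ⟨t, hvt, htw⟩ := exists_up hn v (r1 + 1) (by omega) (by omega)
      have hI := ival_mem (n := n) (r1 := r1) (r2 := r2) (a := v) (b := t)
        (by omega) (by omega)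
      rw [ival_eq_sum] at hI
      set F := Finset.univ.filter (fun i => preceq v i ∧ preceq i t) with hF
      have hvF : v ∈ F := by simp [hF, preceq_refl, hvt]
      rw [← Finset.add_sum_erase F eVec hvF] at hI
      have hrest : ∑ i ∈ F.erase v, eVec i ∈ starProd (Ber n r1 m) (DBer n r2 m) := by
        apply Submodule.sum_mem
        intro i hi
        have hiv : i ≠ v := (Finset.mem_erase.mp hi).1
        have hi' := (Finset.mem_erase.mp hi).2
        rw [hF, Finset.mem_filter] at hi'
        obtain ⟨-, hvi, hit⟩ := hi'
        have h1 : tupleWt v < tupleWt i :=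
          lt_of_le_of_ne (tupleWt_le_of_preceq hvi)
            (fun hc => hiv (eq_of_preceq_of_wt_le hvi (le_of_eq hc.symm)).symm)
        have h2' : tupleWt i ≤ r1 + 1 := htw ▸ tupleWt_le_of_preceq hit
        exact ihk i (by omega) (by omega)
      have := Submodule.sub_mem _ hI hrest
      simpa using this

lemma eVec_mem_all {n m r1 r2 : ℕ} (hn : 2 ≤ n) (h12 : r1 < r2) (h2 : r2 ≤ m) :
    ∀ (k : ℕ) (v : Fin m → Fin n), tupleWt v ≤ k →
      eVec v ∈ starProd (Ber n r1 m) (DBer n r2 m) := by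
  intro k
  induction k with
  | zero => intro v hv; exact eVec_mem_low hn h12 h2 (r1 + 1) v (by omega) (by omega)
  | succ k ihk =>
    intro v hv
    by_cases hvr2 : tupleWt v ≤ r2
    · exact eVec_mem_low hn h12 h2 (r1 + 1) v hvr2 (by omega)
    · obtain ⟨a, hav, haw⟩ := exists_down (tupleWt v) v r2 (by omega) le_rfl
      have hI := ival_mem (n := n) (r1 := r1) (r2 := r2) (a := a) (b := v)
        (by omega) (by omega)
      rw [ival_eq_sum] at hI
      set F := Finset.univ.filter (fun i => preceq a i ∧ preceq i v) with hF
      have hvF : v ∈ F := by simp [hF, preceq_refl, hav]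
      rw [← Finset.add_sum_erase F eVec hvF] at hI
      have hrest : ∑ i ∈ F.erase v, eVec i ∈ starProd (Ber n r1 m) (DBer n r2 m) := by
        apply Submodule.sum_mem
        intro i hi
        have hiv : i ≠ v := (Finset.mem_erase.mp hi).1
        have hi' := (Finset.mem_erase.mp hi).2
        rw [hF, Finset.mem_filter] at hi'
        obtain ⟨-, hai, hivle⟩ := hi'
        have h1 : tupleWt i < tupleWt v :=
          lt_of_le_of_ne (tupleWt_le_of_preceq hivle)
            (fun hc => hiv (eq_of_preceq_of_wt_le hivle (le_of_eq hc.symm)))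
        exact ihk i (by omega)
      have := Submodule.sub_mem _ hI hrest
      simpa using this

end Stmt3


/-- for `n ≥ 2` and `r1 < r2 ≤ m`,
`Ber_n^{r1}(m) ⋆ B_n^{r2}(m) = F_2^{n^m}`. -/
theorem stmt3 (n m r1 r2 : ℕ) (hn : 2 ≤ n) (h12 : r1 < r2) (h2 : r2 ≤ m) :
    (starProd (Ber n r1 m) (DBer n r2 m) : Set ((Fin m → Fin n) → ZMod 2)) = Set.univ := by
  apply Set.eq_univ_iff_forall.mpr
  intro x
  have hx : x = ∑ v, x v • eVec v := by
    funext i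
    rw [Finset.sum_apply]
    simp [eVec, mul_ite, Finset.sum_ite_eq]
  rw [SetLike.mem_coe, hx]
  exact Submodule.sum_mem _ fun v _ =>
    Submodule.smul_mem _ _ (Stmt3.eVec_mem_all hn h12 h2 (tupleWt v) v le_rfl)
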